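/- Let $0<p<1$, $\mu>0$, $\sigma>0$, $\beta>0$, $l>0$, $0<k<r$, and suppose $0<\kappa<k$ where $\kappa:=\frac{\beta-p\left(\frac{\mu^2}{2\sigma^2(1-p)}+r\right)}{1-p}$. Suppose $v:(0,\infty)\to\mathbb{R}$ is three times continuously differentiable, convex, satisfies $v'(y)<-\frac{l}{r-k}$ for all $y>0$, solves the dual ODE $\beta\big(v(y)-y\,v'(y)\big)-\frac{\mu^2}{2\sigma^2}y^2 v''(y)-G\big(-k\,v'(y)+l,\;y\big)+r\,y\,v'(y)=0$ for all $y>0$, and there exist $0<y_0\le y_1$ such that $v'(y)\le -\frac{1}{k}y^{1/(p-1)}+\frac{l}{k}$ for all $y\in(0,y_0]\cup[y_1,\infty)$. Then $v'(y)\le -\frac{1}{k}y^{1/(p-1)}+\frac{l}{k}$ for all $y>0$. -/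

import Mathlib

open Real Set Topology Filter

/-- `G p u y = sup_{c ≥ u} (c^p/p - c y)`. -/
noncomputable def G (p u y : ℝ) : ℝ :=
  sSup ((fun c : ℝ => c ^ p / p - c * y) '' {c : ℝ | u ≤ c})

lemma tangent_rpow {p b c : ℝ} (hp0 : 0 < p) (hp1 : p < 1) (hb : 0 < b) (hc : 0 ≤ c) :
    c ^ p ≤ b ^ p + p * b ^ (p - 1) * (c - b) := by
  have hs : -1 ≤ c / b - 1 := by
    have : 0 ≤ c / b := div_nonneg hc hb.le
    linarith
  have h := rpow_one_add_le_one_add_mul_self hs hp0.le hp1.le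
  have hc' : c = b * (1 + (c / b - 1)) := by field_simp; ring
  have hb' : b ^ (p - 1) = b ^ p / b := by
    rw [rpow_sub hb, rpow_one]
  calc c ^ p = b ^ p * (1 + (c / b - 1)) ^ p := by
        rw [← mul_rpow hb.le (by linarith), ← hc']
    _ ≤ b ^ p * (1 + p * (c / b - 1)) := by
        exact mul_le_mul_of_nonneg_left h (rpow_nonneg hb.le p)
    _ = b ^ p + p * b ^ (p - 1) * (c - b) := by
        rw [hb']; field_simp

lemma G_eq {p u y : ℝ} (hp0 : 0 < p) (hp1 : p < 1) (hy : 0 < y) (hu : 0 < u)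
    (hub : u ≤ y ^ (1 / (p - 1))) :
    G p u y = (1 - p) / p * y ^ (p / (p - 1)) := by
  have hp1' : p - 1 ≠ 0 := by linarith
  set b := y ^ (1 / (p - 1)) with hbdef
  have hbpos : 0 < b := rpow_pos_of_pos hy _
  have hbp : b ^ p = y ^ (p / (p - 1)) := by
    rw [hbdef, ← rpow_mul hy.le]
    congr 1; field_simp
  have hbp1 : b ^ (p - 1) = y := by
    rw [hbdef, ← rpow_mul hy.le]
    rw [show 1 / (p - 1) * (p - 1) = 1 by field_simp, rpow_one]
  have hby : b * y = y ^ (p / (p - 1)) := by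
    rw [hbdef, ← rpow_add_one hy.ne']
    congr 1; field_simp; ring
  have hval : b ^ p / p - b * y = (1 - p) / p * y ^ (p / (p - 1)) := by
    rw [hbp, hby]; field_simp
  apply IsGreatest.csSup_eq
  constructor
  · exact ⟨b, hub, hval⟩
  · rintro x ⟨c, hc, rfl⟩
    simp only [mem_setOf_eq] at hc
    have hc0 : 0 ≤ c := le_trans hu.le hc
    have h := tangent_rpow hp0 hp1 hbpos hc0
    rw [hbp1] at h
    have h2 : c ^ p / p ≤ (b ^ p + p * y * (c - b)) / p := by
      apply div_le_div_of_nonneg_right ?_ hp0.le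
      linarith
    have h3 : (b ^ p + p * y * (c - b)) / p = b ^ p / p + y * (c - b) := by
      field_simp
    rw [← hval]
    rw [h3] at h2
    simp only
    linarith

set_option maxHeartbeats 2000000

/-- small discount factor case (`0 < κ < k`). If a convex `C³` solution `v`
of the dual ODE with `v' < -l/(r-k)` satisfies
`v'(y) ≤ -(1/k) y^(1/(p-1)) + l/k` for all small and all large `y`, then this inequality
holds for all `y > 0`. -/
theorem stmt_10 (p μ σ β r k l : ℝ) (hp0 : 0 < p) (hp1 : p < 1) (hμ : 0 < μ) (hσ : 0 < σ)
    (hβ : 0 < β) (hl : 0 < l) (hk : 0 < k) (hkr : k < r)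
    (hκ0 : 0 < (β - p * (μ ^ 2 / (2 * σ ^ 2 * (1 - p)) + r)) / (1 - p))
    (hκk : (β - p * (μ ^ 2 / (2 * σ ^ 2 * (1 - p)) + r)) / (1 - p) < k)
    (v : ℝ → ℝ) (hv : ContDiffOn ℝ 3 v (Ioi 0))
    (hconv : ConvexOn ℝ (Ioi 0) v)
    (hv' : ∀ y ∈ Ioi (0 : ℝ), deriv v y < -(l / (r - k)))
    (hODE : ∀ y ∈ Ioi (0 : ℝ),
      β * (v y - y * deriv v y) - μ ^ 2 / (2 * σ ^ 2) * y ^ 2 * deriv (deriv v) y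
        - G p (-k * deriv v y + l) y + r * y * deriv v y = 0)
    (y₀ y₁ : ℝ) (hy₀ : 0 < y₀) (hy₀₁ : y₀ ≤ y₁)
    (htail : ∀ y : ℝ, (0 < y ∧ y ≤ y₀) ∨ y₁ ≤ y →
      deriv v y ≤ -(1 / k) * y ^ (1 / (p - 1)) + l / k) :
    ∀ y : ℝ, 0 < y → deriv v y ≤ -(1 / k) * y ^ (1 / (p - 1)) + l / k := by
  intro y hy
  by_contra hcon
  push_neg at hcon
  have hp1' : p - 1 ≠ 0 := by linarith
  have hr : 0 < r := hk.trans hkr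
  have hrk : 0 < r - k := by linarith
  set m : ℝ := 1 / (p - 1) with hm
  set q : ℝ := p / (p - 1) with hq
  set a : ℝ := μ ^ 2 / (2 * σ ^ 2) with ha
  have ha0 : 0 < a := by rw [ha]; positivity
  set g : ℝ → ℝ := fun t => deriv v t + (1 / k) * t ^ m - l / k with hgdef
  -- differentiability facts
  have hv1 : ∀ t ∈ Ioi (0:ℝ), HasDerivAt v (deriv v t) t := fun t ht =>
    ((hv.contDiffAt (isOpen_Ioi.mem_nhds ht)).differentiableAt (by norm_num)).hasDerivAt
  have hvd2 : ContDiffOn ℝ 2 (deriv v) (Ioi 0) :=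
    hv.deriv_of_isOpen isOpen_Ioi (by norm_num)
  have hvd3 : ContDiffOn ℝ 1 (deriv (deriv v)) (Ioi 0) :=
    hvd2.deriv_of_isOpen isOpen_Ioi (by norm_num)
  have hv2 : ∀ t ∈ Ioi (0:ℝ), HasDerivAt (deriv v) (deriv (deriv v) t) t := fun t ht =>
    ((hvd2.contDiffAt (isOpen_Ioi.mem_nhds ht)).differentiableAt (by norm_num)).hasDerivAt
  have hv3 : ∀ t ∈ Ioi (0:ℝ), HasDerivAt (deriv (deriv v)) (deriv (deriv (deriv v)) t) t :=
    fun t ht =>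
    ((hvd3.contDiffAt (isOpen_Ioi.mem_nhds ht)).differentiableAt (by norm_num)).hasDerivAt
  have hg1 : ∀ t ∈ Ioi (0:ℝ),
      HasDerivAt g (deriv (deriv v) t + (1 / k) * (m * t ^ (m - 1))) t := by
    intro t ht
    have h1 : HasDerivAt (fun s : ℝ => s ^ m) (m * t ^ (m - 1)) t :=
      Real.hasDerivAt_rpow_const (Or.inl (ne_of_gt ht))
    exact ((hv2 t ht).add (h1.const_mul (1 / k))).sub_const (l / k)
  -- locate the bad point strictly between y₀ and y₁
  have hgy : 0 < g y := by simp only [hgdef]; linarith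
  have hyy₀ : y₀ < y := by
    by_contra hle
    push_neg at hle
    have := htail y (Or.inl ⟨hy, hle⟩)
    simp only [hgdef] at hgy
    linarith
  have hyy₁ : y < y₁ := by
    by_contra hle
    push_neg at hle
    have := htail y (Or.inr hle)
    simp only [hgdef] at hgy
    linarith
  -- maximum of g on [y₀, y₁]
  have hIcc : Icc y₀ y₁ ⊆ Ioi (0:ℝ) := fun t ht => lt_of_lt_of_le hy₀ ht.1
  have hcont : ContinuousOn g (Icc y₀ y₁) := fun t ht =>
    (hg1 t (hIcc ht)).continuousAt.continuousWithinAt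
  obtain ⟨z, hzmem, hzmax⟩ := isCompact_Icc.exists_isMaxOn (nonempty_Icc.2 hy₀₁) hcont
  have hgz : 0 < g z := lt_of_lt_of_le hgy (hzmax ⟨hyy₀.le, hyy₁.le⟩)
  have hgy₀ : g y₀ ≤ 0 := by
    have := htail y₀ (Or.inl ⟨hy₀, le_refl _⟩)
    simp only [hgdef]; linarith
  have hgy₁ : g y₁ ≤ 0 := by
    have := htail y₁ (Or.inr (le_refl _))
    simp only [hgdef]; linarith
  have hzy₀ : y₀ < z := lt_of_le_of_ne hzmem.1 (by rintro rfl; linarith)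
  have hzy₁ : z < y₁ := lt_of_le_of_ne hzmem.2 (by rintro rfl; linarith)
  have hz : z ∈ Ioi (0:ℝ) := hIcc hzmem
  have hz0 : 0 < z := hz
  -- first derivative vanishes at z
  have hloc : IsLocalMax g z := hzmax.isLocalMax (Icc_mem_nhds hzy₀ hzy₁)
  have hdg0 : deriv (deriv v) z + (1 / k) * (m * z ^ (m - 1)) = 0 := by
    rw [← (hg1 z hz).deriv]
    exact hloc.deriv_eq_zero
  -- second derivative test
  set G1 : ℝ → ℝ := fun t => deriv (deriv v) t + (1 / k) * (m * t ^ (m - 1)) with hG1def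
  have hG1z : G1 z = 0 := hdg0
  have hG1has : HasDerivAt G1
      (deriv (deriv (deriv v)) z + (1 / k) * (m * ((m - 1) * z ^ (m - 2)))) z := by
    have h1 : HasDerivAt (fun s : ℝ => s ^ (m - 1)) ((m - 1) * z ^ (m - 1 - 1)) z :=
      Real.hasDerivAt_rpow_const (Or.inl (ne_of_gt hz0))
    rw [show m - 1 - 1 = m - 2 by ring] at h1
    exact (hv3 z hz).add ((h1.const_mul m).const_mul (1 / k))
  have hV3 : deriv (deriv (deriv v)) z + (1 / k) * (m * ((m - 1) * z ^ (m - 2))) ≤ 0 := by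
    by_contra hpos
    push_neg at hpos
    have hslope := hasDerivAt_iff_tendsto_slope.1 hG1has
    have hev : ∀ᶠ t in 𝓝[>] z, 0 < slope G1 z t :=
      nhdsWithin_mono z (fun t (ht : t ∈ Ioi z) => ne_of_gt ht)
        (hslope.eventually (eventually_gt_nhds hpos))
    have hev2 : ∀ᶠ t in 𝓝[>] z, t < y₁ :=
      eventually_nhdsWithin_of_eventually_nhds (eventually_lt_nhds hzy₁)
    obtain ⟨u, hu, husub⟩ := mem_nhdsGT_iff_exists_Ioo_subset.1 (hev.and hev2)
    set c := min u y₁ with hcdef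
    have hzc : z < c := lt_min hu hzy₁
    set w := (z + c) / 2 with hwdef
    have hzw : z < w := by rw [hwdef]; linarith
    have hwc : w < c := by rw [hwdef]; linarith
    have hmono : StrictMonoOn g (Icc z w) := by
      apply strictMonoOn_of_deriv_pos (convex_Icc z w)
      · intro t ht
        exact (hg1 t (lt_of_lt_of_le hz0 ht.1)).continuousAt.continuousWithinAt
      · intro t ht
        rw [interior_Icc] at ht
        have ht0 : t ∈ Ioi (0:ℝ) := lt_trans hz0 ht.1
        have htu : t ∈ Ioo z u := ⟨ht.1, lt_of_lt_of_le (ht.2.trans hwc) (min_le_left _ _)⟩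
        have hG1pos := (husub htu).1
        have : 0 < G1 t := by
          have hslope_eq : slope G1 z t = G1 t / (t - z) := by
            rw [slope_def_field, hG1z]; ring
          rw [hslope_eq] at hG1pos
          have := mul_pos hG1pos (sub_pos.2 ht.1)
          rwa [div_mul_cancel₀] at this
          exact ne_of_gt (sub_pos.2 ht.1)
        rw [(hg1 t ht0).deriv]
        exact this
    have hgw : g z < g w := hmono (left_mem_Icc.2 hzw.le) (right_mem_Icc.2 hzw.le) hzw
    have hwmem : w ∈ Icc y₀ y₁ := by
      constructor
      · linarith
      · have : w < y₁ := lt_of_lt_of_le (hwc.trans_le (min_le_right u y₁)) (le_refl _)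
        linarith
    exact absurd (hzmax hwmem) (not_le.2 hgw)
  -- the ODE with explicit G near z
  set F : ℝ → ℝ := fun t => β * (v t - t * deriv v t) - a * (t ^ 2 * deriv (deriv v) t)
      - (1 - p) / p * t ^ q + (r * t) * deriv v t with hFdef
  have hFev : F =ᶠ[𝓝 z] fun _ => 0 := by
    have h1 : ∀ᶠ t in 𝓝 z, 0 < t := eventually_gt_nhds hz0
    have h2 : ∀ᶠ t in 𝓝 z, 0 < g t :=
      (hg1 z hz).continuousAt.eventually_const_lt hgz
    filter_upwards [h1, h2] with t ht0 hgt
    have hu0 : 0 < -k * deriv v t + l := by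
      have hvt := hv' t ht0
      have : 0 < l / (r - k) := div_pos hl hrk
      nlinarith
    have hub : -k * deriv v t + l ≤ t ^ m := by
      simp only [hgdef] at hgt
      have h8 : k * (-(1 / k) * t ^ m + l / k) = -t ^ m + l := by field_simp
      have hXlt : -(1 / k) * t ^ m + l / k < deriv v t := by linarith
      have h9 := mul_lt_mul_of_pos_left hXlt hk
      rw [h8] at h9
      linarith
    have hGt := G_eq hp0 hp1 ht0 hu0 hub
    have hODEt := hODE t ht0
    rw [hGt] at hODEt
    simp only [hFdef]
    linarith [hODEt]
  have hderivF0 : deriv F z = 0 := by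
    rw [hFev.deriv_eq]
    exact deriv_const z 0
  -- compute the derivative of F at z
  have hFhas : HasDerivAt F
      (β * (deriv v z - (1 * deriv v z + z * deriv (deriv v) z))
        - a * ((↑2 * z ^ (2 - 1)) * deriv (deriv v) z + z ^ 2 * deriv (deriv (deriv v)) z)
        - (1 - p) / p * (q * z ^ (q - 1))
        + ((r * 1) * deriv v z + (r * z) * deriv (deriv v) z)) z := by
    have h1 : HasDerivAt (fun t : ℝ => v t - t * deriv v t)
        (deriv v z - (1 * deriv v z + z * deriv (deriv v) z)) z :=
      (hv1 z hz).sub ((hasDerivAt_id' z).mul (hv2 z hz))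
    have h2 : HasDerivAt (fun t : ℝ => t ^ 2 * deriv (deriv v) t)
        ((↑2 * z ^ (2 - 1)) * deriv (deriv v) z + z ^ 2 * deriv (deriv (deriv v)) z) z :=
      (hasDerivAt_pow 2 z).mul (hv3 z hz)
    have h3 : HasDerivAt (fun t : ℝ => t ^ q) (q * z ^ (q - 1)) z :=
      Real.hasDerivAt_rpow_const (Or.inl (ne_of_gt hz0))
    have h4 : HasDerivAt (fun t : ℝ => (r * t) * deriv v t)
        ((r * 1) * deriv v z + (r * z) * deriv (deriv v) z) z :=
      ((hasDerivAt_id' z).const_mul r).mul (hv2 z hz)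
    exact (((h1.const_mul β).sub (h2.const_mul a)).sub (h3.const_mul ((1 - p) / p))).add h4
  have hD0 : β * (deriv v z - (1 * deriv v z + z * deriv (deriv v) z))
        - a * ((↑2 * z ^ (2 - 1)) * deriv (deriv v) z + z ^ 2 * deriv (deriv (deriv v)) z)
        - (1 - p) / p * (q * z ^ (q - 1))
        + ((r * 1) * deriv v z + (r * z) * deriv (deriv v) z) = 0 := by
    rw [← hFhas.deriv]; exact hderivF0
  -- algebraic consequences
  set Y := z ^ m with hY
  have hYpos : 0 < Y := rpow_pos_of_pos hz0 m
  have hzm1 : z ^ (m - 1) = Y / z := by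
    rw [hY, rpow_sub hz0, rpow_one]
  have hzm2 : z ^ (m - 2) = Y / z ^ 2 := by
    rw [hY, rpow_sub hz0]
    congr 1
    rw [show (2:ℝ) = ((2:ℕ):ℝ) by norm_num, rpow_natCast]
  have hqm : z ^ (q - 1) = Y := by
    rw [hY]; congr 1; rw [hq, hm]; field_simp; ring
  have hV2 : deriv (deriv v) z = -(1 / k) * (m * (Y / z)) := by
    rw [← hzm1]; linarith [hdg0]
  have hzV2 : z * deriv (deriv v) z = -(m / k) * Y := by
    rw [hV2]; field_simp
  have hz2V3 : z ^ 2 * deriv (deriv (deriv v)) z ≤ -(m * (m - 1) / k) * Y := by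
    have h := hV3
    rw [hzm2] at h
    have h2 : deriv (deriv (deriv v)) z ≤ -(1 / k) * (m * ((m - 1) * (Y / z ^ 2))) := by
      linarith
    have h3 := mul_le_mul_of_nonneg_left h2 (sq_nonneg z)
    calc z ^ 2 * deriv (deriv (deriv v)) z
        ≤ z ^ 2 * (-(1 / k) * (m * ((m - 1) * (Y / z ^ 2)))) := h3
      _ = -(m * (m - 1) / k) * Y := by
          field_simp
  have hCq : (1 - p) / p * q = -1 := by
    rw [hq]; field_simp; ring
  -- reduce hD0
  have hfin : 0 = -(β + 2 * a - r) * (z * deriv (deriv v) z)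
      - a * (z ^ 2 * deriv (deriv (deriv v)) z) - ((1 - p) / p * q) * Y + r * deriv v z := by
    rw [hqm] at hD0
    push_cast at hD0
    linear_combination -hD0
  rw [hCq, hzV2] at hfin
  -- lower bounds
  have hV1 : -(1 / k) * Y + l / k < deriv v z := by
    simp only [hgdef] at hgz
    rw [hY]
    linarith
  have s2 : r * (-(1 / k) * Y + l / k) < r * deriv v z := mul_lt_mul_of_pos_left hV1 hr
  have s1 : -a * (-(m * (m - 1) / k) * Y) ≤ -a * (z ^ 2 * deriv (deriv (deriv v)) z) := by
    apply mul_le_mul_of_nonpos_left hz2V3 (by linarith)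
  have hlower : 0 > -(β + 2 * a - r) * (-(m / k) * Y)
      - a * (-(m * (m - 1) / k) * Y) - (-1 : ℝ) * Y + r * (-(1 / k) * Y + l / k) := by
    linarith
  -- final identity and contradiction
  set κ := (β - p * (μ ^ 2 / (2 * σ ^ 2 * (1 - p)) + r)) / (1 - p) with hκ
  have hkey : -(β + 2 * a - r) * (-(m / k) * Y)
      - a * (-(m * (m - 1) / k) * Y) - (-1 : ℝ) * Y + r * (-(1 / k) * Y + l / k)
      = r * l / k + ((k - κ) / k) * Y := by
    rw [hκ, hm, ha]
    have hσ' : σ ≠ 0 := ne_of_gt hσ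
    have h1p : (1:ℝ) - p ≠ 0 := by linarith
    field_simp
    ring
  rw [hkey] at hlower
  have hpos1 : 0 < r * l / k := by positivity
  have hpos2 : 0 < ((k - κ) / k) * Y :=
    mul_pos (div_pos (by linarith) hk) hYpos
  linarith
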